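/- Let H be a complex inner product space and let T : H → H be a linear projection (T∘T = T) that is neither 0 nor the identity, and assume T is bounded. Then the operator norms satisfy ‖I − T‖ = ‖T‖. -/

import Mathlib

open scoped InnerProductSpace

lemma real_core (n t u r K : ℝ) (hn : 0 < n) (ht : 0 < t) (hu : 0 ≤ u)
    (hcs : u ≤ t * n) (hr : r ≤ u) (hK : 1 ≤ K)
    (h : t^2 * (n^2 - 2*r + t^2) ≤ K^2 * (n^2 * t^2 - u^2)) :
    t ≤ K * n := by
  have hD : 0 ≤ n^2 * t^2 - u^2 := by nlinarith [mul_le_mul hcs hcs hu (mul_nonneg ht.le hn.le)]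
  have key : t^2*(n^2-u)^2 + t^2*(n^2*t^2-u^2) ≤ K^2*n^2*(n^2*t^2-u^2) := by
    nlinarith [mul_le_mul_of_nonneg_left h (sq_nonneg n),
      mul_nonneg (sub_nonneg.2 hr) (mul_nonneg (sq_nonneg n) (sq_nonneg t))]
  have hKn : 0 ≤ (K - 1) * n := mul_nonneg (by linarith) hn.le
  rcases eq_or_lt_of_le hD with hDz | hDp
  · have hDz' : n^2*t^2 - u^2 = 0 := hDz.symm
    rw [hDz'] at key
    have h5 : (n^2-u)^2 ≤ 0 := by
      by_contra hc
      push_neg at hc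
      nlinarith [mul_pos (mul_pos ht ht) hc]
    have h6 : u = n^2 := by nlinarith [sq_nonneg (n^2-u)]
    have h7 : t^2 = n^2 := by
      have : n^2 * t^2 = n^2 * n^2 := by nlinarith [hDz']
      exact mul_left_cancel₀ (by positivity) this
    nlinarith [h7, hKn]
  · have h2 : t^2 * (n^2*t^2-u^2) ≤ K^2*n^2*(n^2*t^2-u^2) := by
      nlinarith [key, mul_nonneg (sq_nonneg t) (sq_nonneg (n^2-u))]
    have h3 : t^2 ≤ K^2*n^2 := le_of_mul_le_mul_right h2 hDp
    nlinarith [h3, hKn]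

lemma one_le_norm_idem {H : Type*} [NormedAddCommGroup H] [InnerProductSpace ℂ H]
    (P : H →L[ℂ] H) (hP : P.comp P = P) (h0 : P ≠ 0) : 1 ≤ ‖P‖ := by
  have h := ContinuousLinearMap.opNorm_comp_le P P
  rw [hP] at h
  have hpos : 0 < ‖P‖ := norm_pos_iff.2 h0
  nlinarith

lemma aux_le {H : Type*} [NormedAddCommGroup H] [InnerProductSpace ℂ H]
    (P : H →L[ℂ] H) (hP : P.comp P = P)
    (hK : 1 ≤ ‖ContinuousLinearMap.id ℂ H - P‖) :
    ‖P‖ ≤ ‖ContinuousLinearMap.id ℂ H - P‖ := by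
  set Q := ContinuousLinearMap.id ℂ H - P with hQdef
  set K := ‖Q‖ with hKdef
  have hPP : ∀ z, P (P z) = P z := fun z => by
    conv_rhs => rw [← hP]
    rfl
  apply ContinuousLinearMap.opNorm_le_bound _ (le_trans zero_le_one hK)
  intro x
  by_cases hx : P x = 0
  · rw [hx, norm_zero]
    positivity
  · set t := ‖P x‖ with htdef
    set n := ‖x‖ with hndef
    have ht : 0 < t := norm_pos_iff.2 hx
    have hn : 0 < n := by
      rcases eq_or_ne x 0 with rfl | hxx
      · exact absurd (by simp) hx
      · exact norm_pos_iff.2 hxx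
    set s := (⟪P x, x⟫_ℂ) with hsdef
    set y := x - ((s / (t:ℂ)^2) • P x) with hydef
    have h1 : Q y = x - P x := by
      have hPy : P y = P x - (s / (t:ℂ)^2) • P x := by
        simp [hydef, map_sub, map_smul, hPP]
      simp only [hQdef, ContinuousLinearMap.sub_apply, ContinuousLinearMap.id_apply, hPy, hydef, map_sub, map_smul, hPP]
      module
    have h2 : ‖x - P x‖ ≤ K * ‖y‖ := by
      rw [← h1]
      exact Q.le_opNorm y
    have hts : ((t:ℂ)^2) ≠ 0 :=
      pow_ne_zero _ (by exact_mod_cast ht.ne')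
    have h3 : ‖y‖^2 = n^2 - ‖s‖^2 / t^2 := by
      rw [hydef, @norm_sub_sq ℂ]
      have hre : RCLike.re (⟪x, (s / (t:ℂ)^2) • P x⟫_ℂ) = ‖s‖^2 / t^2 := by
        rw [inner_smul_right]
        have hxy : (⟪x, P x⟫_ℂ) = starRingEnd ℂ s := by
          rw [hsdef, ← inner_conj_symm]
        rw [hxy]
        have hmc : s / (t:ℂ)^2 * starRingEnd ℂ s = ((‖s‖^2 / t^2 : ℝ) : ℂ) := by
          rw [div_mul_eq_mul_div, Complex.mul_conj, Complex.normSq_eq_norm_sq]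
          push_cast
          ring
        rw [hmc]
        exact Complex.ofReal_re _
      have hnorm : ‖(s / (t:ℂ)^2) • P x‖^2 = ‖s‖^2 / t^2 := by
        rw [norm_smul]
        rw [norm_div]
        have : ‖(t:ℂ)^2‖ = t^2 := by
          rw [norm_pow, Complex.norm_real, Real.norm_eq_abs, abs_of_pos ht]
        rw [this]
        field_simp
        ring
      rw [hre, hnorm]
      ring
    have h4 : ‖x - P x‖^2 = n^2 - 2*(Complex.re s) + t^2 := by
      rw [@norm_sub_sq ℂ]
      have hxy : (⟪x, P x⟫_ℂ) = starRingEnd ℂ s := by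
        rw [hsdef, ← inner_conj_symm]
      rw [hxy]
      simp [Complex.conj_re]
      rfl
    have h5 : ‖s‖ ≤ t * n := norm_inner_le_norm _ _
    have h6 : Complex.re s ≤ ‖s‖ := by
      exact Complex.re_le_norm s
    have hsq : ‖x - P x‖^2 ≤ K^2 * ‖y‖^2 := by
      have := mul_le_mul h2 h2 (norm_nonneg _) (by positivity)
      nlinarith [this]
    have hmain : t^2 * (n^2 - 2*(Complex.re s) + t^2) ≤ K^2 * (n^2 * t^2 - ‖s‖^2) := by
      rw [h4, h3] at hsq
      have ht2 : (0:ℝ) < t^2 := by positivity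
      have := mul_le_mul_of_nonneg_right hsq ht2.le
      calc t^2 * (n^2 - 2*(Complex.re s) + t^2)
          = (n^2 - 2*(Complex.re s) + t^2) * t^2 := by ring
        _ ≤ K^2 * (n^2 - ‖s‖^2/t^2) * t^2 := this
        _ = K^2 * (n^2 * t^2 - ‖s‖^2) := by field_simp
    exact real_core n t ‖s‖ (Complex.re s) K hn ht (norm_nonneg _) h5 h6 hK hmain
/-- Xu–Zikatanov identity: for a nontrivial bounded idempotent `T` on a Hilbert
space, `‖I − T‖ = ‖T‖`. -/
theorem stmt_2 {H : Type*} [NormedAddCommGroup H] [InnerProductSpace ℂ H]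
    [CompleteSpace H] (T : H →L[ℂ] H)
    (hidem : T.comp T = T) (h0 : T ≠ 0)
    (h1 : T ≠ ContinuousLinearMap.id ℂ H) :
    ‖ContinuousLinearMap.id ℂ H - T‖ = ‖T‖ := by
  set Q : H →L[ℂ] H := ContinuousLinearMap.id ℂ H - T with hQdef
  have hTT : ∀ z, T (T z) = T z := fun z => by
    conv_rhs => rw [← hidem]
    rfl
  have hQidem : Q.comp Q = Q := by
    ext x
    simp [hQdef, ContinuousLinearMap.sub_apply, map_sub, hTT]
  have hQ0 : Q ≠ 0 := by
    intro h
    exact h1 (by rwa [hQdef, sub_eq_zero, eq_comm] at h)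
  have hidQ : ContinuousLinearMap.id ℂ H - Q = T := by
    rw [hQdef]; abel
  have hQ1 : 1 ≤ ‖Q‖ := one_le_norm_idem Q hQidem hQ0
  have hT1 : 1 ≤ ‖ContinuousLinearMap.id ℂ H - Q‖ := by
    rw [hidQ]; exact one_le_norm_idem T hidem h0
  have le1 : ‖T‖ ≤ ‖Q‖ := aux_le T hidem hQ1
  have le2 : ‖Q‖ ≤ ‖T‖ := by
    have := aux_le Q hQidem hT1
    rwa [hidQ] at this
  exact le_antisymm le2 le1
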